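/- Let θ ∈ ℚ^{Q₀} be a rational weight, (V,ρ) a nonzero complex representation of Q, and h an Einstein–Hermitian metric on (V,ρ) with respect to θ. Then there exists a finite family (V_i,ρ_i)_{i∈I} of θ-stable subrepresentations of (V,ρ) such that (V,ρ) = ⊕_{i∈I}(V_i,ρ_i) and such that for all i, j ∈ I with i ≠ j, the subrepresentations (V_i,ρ_i) and (V_j,ρ_j) are orthogonal with respect to h. -/

import Mathlib

open Module

variable {Q₀ Q₁ : Type*} [Fintype Q₀] [Fintype Q₁] [DecidableEq Q₀]
  (s t : Q₁ → Q₀)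
  (V : Q₀ → Type*) [∀ a, NormedAddCommGroup (V a)] [∀ a, InnerProductSpace ℂ (V a)]
  [∀ a, FiniteDimensional ℂ (V a)]

/-- `W` is a subrepresentation of the representation `(V, ρ)` of the quiver
`(Q₀, Q₁, s, t)`. -/
def IsSubrep (ρ : ∀ α, V (s α) →ₗ[ℂ] V (t α)) (W : ∀ a, Submodule ℂ (V a)) : Prop :=
  ∀ α, ∀ x ∈ W (s α), ρ α x ∈ W (t α)

/-- `f` is an endomorphism of the representation `(V, ρ)`. -/
def IsRepEndo (ρ : ∀ α, V (s α) →ₗ[ℂ] V (t α)) (f : ∀ a, V a →ₗ[ℂ] V a) : Prop :=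
  ∀ α, (f (t α)) ∘ₗ (ρ α) = (ρ α) ∘ₗ (f (s α))

/-- The representation `(V, ρ)` is Schur: every endomorphism is a scalar multiple of the
identity. -/
def IsSchurRep (ρ : ∀ α, V (s α) →ₗ[ℂ] V (t α)) : Prop :=
  ∀ f : ∀ a, V a →ₗ[ℂ] V a, IsRepEndo s t V ρ f →
    ∃ c : ℂ, ∀ a, f a = c • LinearMap.id

/-- `f` is skew-Hermitian with respect to the Hermitian metric given by the inner
products on the `V a`. -/
def IsSkewHermEndo (f : ∀ a, V a →ₗ[ℂ] V a) : Prop :=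
  ∀ a, ∀ v w : V a, inner (𝕜 := ℂ) (f a v) w + inner (𝕜 := ℂ) v (f a w) = 0

/-- The Hermitian metric on `(V, ρ)` is irreducible: every skew-Hermitian endomorphism of
`(V, ρ)` is a scalar multiple of the identity. -/
def IsIrreducibleMetric (ρ : ∀ α, V (s α) →ₗ[ℂ] V (t α)) : Prop :=
  ∀ f : ∀ a, V a →ₗ[ℂ] V a, IsRepEndo s t V ρ f → IsSkewHermEndo V f →
    ∃ c : ℂ, ∀ a, f a = c • LinearMap.id

/-- Two subrepresentations are orthogonal with respect to the Hermitian metric. -/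
def OrthSubreps (W W' : ∀ a, Submodule ℂ (V a)) : Prop :=
  ∀ a, ∀ v ∈ W a, ∀ w ∈ W' a, inner (𝕜 := ℂ) v w = (0 : ℂ)

/-- The `θ`-slope of the representation `(V, ρ)`. -/
noncomputable def repSlope (θ : Q₀ → ℝ) : ℝ :=
  (∑ a, θ a * (finrank ℂ (V a) : ℝ)) / (∑ a, (finrank ℂ (V a) : ℝ))

/-- The `θ`-slope of a subrepresentation `W`. -/
noncomputable def subSlope (θ : Q₀ → ℝ) (W : ∀ a, Submodule ℂ (V a)) : ℝ :=
  (∑ a, θ a * (finrank ℂ (W a) : ℝ)) / (∑ a, (finrank ℂ (W a) : ℝ))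

/-- The representation `(V, ρ)` is `θ`-stable: it is nonzero and every nonzero proper
subrepresentation has strictly smaller `θ`-slope. -/
noncomputable def IsStableRep (ρ : ∀ α, V (s α) →ₗ[ℂ] V (t α)) (θ : Q₀ → ℝ) : Prop :=
  (0 < ∑ a, finrank ℂ (V a)) ∧
  ∀ W : ∀ a, Submodule ℂ (V a), IsSubrep s t V ρ W →
    (∃ a, W a ≠ ⊥) → (∃ a, W a ≠ ⊤) → subSlope V θ W < repSlope V θ

/-- The subrepresentation `W` of `(V, ρ)` is `θ`-stable as a representation in its own
right: it is nonzero and every nonzero proper subrepresentation of it (i.e. every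
subrepresentation of `(V, ρ)` contained in `W`) has strictly smaller `θ`-slope. -/
noncomputable def IsStableSubrep (ρ : ∀ α, V (s α) →ₗ[ℂ] V (t α)) (θ : Q₀ → ℝ)
    (W : ∀ a, Submodule ℂ (V a)) : Prop :=
  (∃ a, W a ≠ ⊥) ∧
  ∀ W' : ∀ a, Submodule ℂ (V a), IsSubrep s t V ρ W' → (∀ a, W' a ≤ W a) →
    (∃ a, W' a ≠ ⊥) → W' ≠ W → subSlope V θ W' < subSlope V θ W

/-- The summand `ρ_α ∘ ρ_α*` of `K_θ(V,ρ,h)_a`, for an arrow `α` with target `a`. -/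
noncomputable def tTerm (ρ : ∀ α, V (s α) →ₗ[ℂ] V (t α)) (a : Q₀)
    (α : {α : Q₁ // t α = a}) : Module.End ℂ (V a) :=
  α.2 ▸ ((ρ α.1) ∘ₗ (LinearMap.adjoint (ρ α.1)))

/-- The summand `ρ_α* ∘ ρ_α` of `K_θ(V,ρ,h)_a`, for an arrow `α` with source `a`. -/
noncomputable def sTerm (ρ : ∀ α, V (s α) →ₗ[ℂ] V (t α)) (a : Q₀)
    (α : {α : Q₁ // s α = a}) : Module.End ℂ (V a) :=
  α.2 ▸ ((LinearMap.adjoint (ρ α.1)) ∘ₗ (ρ α.1))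

/-- The endomorphism `K_θ(V,ρ,h)_a = θ_a id + ∑_{t(α)=a} ρ_α ρ_α* − ∑_{s(α)=a} ρ_α* ρ_α`
of `V a`. -/
noncomputable def Kop (ρ : ∀ α, V (s α) →ₗ[ℂ] V (t α)) (θ : Q₀ → ℝ) (a : Q₀) :
    Module.End ℂ (V a) :=
  ((θ a : ℂ)) • (LinearMap.id : V a →ₗ[ℂ] V a) +
    (∑ α : {α : Q₁ // t α = a}, tTerm s t V ρ a α) -
    (∑ α : {α : Q₁ // s α = a}, sTerm s t V ρ a α)

/-- The Hermitian metric `h` on `(V, ρ)` is Einstein–Hermitian with respect to `θ`: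
`K_θ(V,ρ,h)_a = c • id` for all `a`, for some constant `c ∈ ℂ`. -/
noncomputable def IsEinsteinHermitian (ρ : ∀ α, V (s α) →ₗ[ℂ] V (t α)) (θ : Q₀ → ℝ) :
    Prop :=
  ∃ c : ℂ, ∀ a, Kop s t V ρ θ a = c • (LinearMap.id : V a →ₗ[ℂ] V a)


/-! ### Auxiliary material for the proof -/

section AuxInner

set_option linter.unusedSectionVars false

variable {E F : Type*} [NormedAddCommGroup E] [InnerProductSpace ℂ E] [FiniteDimensional ℂ E]
  [NormedAddCommGroup F] [InnerProductSpace ℂ F] [FiniteDimensional ℂ F]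

noncomputable def projL (U : Submodule ℂ E) : E →ₗ[ℂ] E :=
  U.subtype ∘ₗ (Submodule.orthogonalProjectionOnto U).toLinearMap

lemma projL_mem (U : Submodule ℂ E) (x : E) : projL U x ∈ U := (Submodule.orthogonalProjectionOnto U x).2

lemma projL_eq_self {U : Submodule ℂ E} {x : E} (hx : x ∈ U) : projL U x = x := by
  exact (Submodule.starProjection_eq_self_iff (K := U)).2 hx

lemma projL_eq_zero {U : Submodule ℂ E} {x : E} (hx : x ∈ Uᗮ) : projL U x = 0 := by
  simp [projL, Submodule.orthogonalProjectionOnto_apply_of_mem_orthogonal hx]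

lemma projL_adjoint (U : Submodule ℂ E) : LinearMap.adjoint (projL U) = projL U := by
  symm; rw [LinearMap.eq_adjoint_iff]
  intro x y
  exact Submodule.inner_starProjection_left_eq_right U x y

lemma projL_idem (U : Submodule ℂ E) : projL U ∘ₗ projL U = projL U := by
  ext x; exact projL_eq_self (projL_mem U x)

lemma sub_projL_mem_orthogonal (U : Submodule ℂ E) (x : E) : x - projL U x ∈ Uᗮ :=
  Submodule.sub_starProjection_mem_orthogonal (K := U) x

lemma projL_trace (U : Submodule ℂ E) :
    LinearMap.trace ℂ E (projL U) = (Module.finrank ℂ U : ℂ) := by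
  have h : LinearMap.IsProj U (projL U) := by
    constructor
    · exact fun x => projL_mem U x
    · exact fun x hx => projL_eq_self hx
  exact h.trace

lemma trace_eq_sum_inner (b : OrthonormalBasis (Fin (Module.finrank ℂ E)) ℂ E)
    (f : E →ₗ[ℂ] E) :
    LinearMap.trace ℂ E f = ∑ i, inner (𝕜 := ℂ) (b i) (f (b i)) := by
  rw [LinearMap.trace_eq_matrix_trace ℂ b.toBasis f, Matrix.trace]
  congr 1
  ext i
  rw [Matrix.diag_apply, LinearMap.toMatrix_apply, b.coe_toBasis, b.coe_toBasis_repr_apply,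
    b.repr_apply_apply]

lemma trace_adjoint_comp_self (X : E →ₗ[ℂ] F) :
    ∃ r : ℝ, 0 ≤ r ∧ LinearMap.trace ℂ E (LinearMap.adjoint X ∘ₗ X) = (r : ℂ) ∧
      (r = 0 ↔ X = 0) := by
  set b := stdOrthonormalBasis ℂ E
  refine ⟨∑ i, ‖X (b i)‖ ^ 2, Finset.sum_nonneg fun i _ => by positivity, ?_, ?_⟩
  · rw [trace_eq_sum_inner b]
    push_cast
    congr 1
    ext i
    simp only [Function.comp_apply]
    rw [LinearMap.adjoint_inner_right, inner_self_eq_norm_sq_to_K]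
    norm_cast
  · constructor
    · intro h
      have h0 : ∀ i, X (b i) = 0 := by
        intro i
        have h1 := (Finset.sum_eq_zero_iff_of_nonneg (fun i _ => by positivity)).1 h i
          (Finset.mem_univ i)
        have h2 := pow_eq_zero_iff (n := 2) (by norm_num) |>.1 h1
        simpa using h2
      apply b.toBasis.ext
      intro i
      simpa using h0 i
    · intro h; simp [h]

lemma key_trace_identity (B : E →ₗ[ℂ] F) (U : Submodule ℂ E) (U' : Submodule ℂ F)
    (hB : ∀ x ∈ U, B x ∈ U') :
    LinearMap.trace ℂ F (projL U' ∘ₗ B ∘ₗ LinearMap.adjoint B) -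
      LinearMap.trace ℂ E (projL U ∘ₗ LinearMap.adjoint B ∘ₗ B) =
    LinearMap.trace ℂ E (LinearMap.adjoint (projL U' ∘ₗ B - B ∘ₗ projL U) ∘ₗ
      (projL U' ∘ₗ B - B ∘ₗ projL U)) := by
  set P := projL U with hP
  set Q := projL U' with hQ
  set Bd := LinearMap.adjoint B with hBd
  have hPidem : P ∘ₗ P = P := projL_idem U
  have hQidem : Q ∘ₗ Q = Q := projL_idem U'
  have hPadj : LinearMap.adjoint P = P := projL_adjoint U
  have hQadj : LinearMap.adjoint Q = Q := projL_adjoint U'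
  have hQBP : Q ∘ₗ (B ∘ₗ P) = B ∘ₗ P := by
    ext x; exact projL_eq_self (hB _ (projL_mem U x))
  have hadj : LinearMap.adjoint (Q ∘ₗ B - B ∘ₗ P) = Bd ∘ₗ Q - P ∘ₗ Bd := by
    rw [map_sub, LinearMap.adjoint_comp, LinearMap.adjoint_comp, hPadj, hQadj]
  rw [hadj]
  have expand : (Bd ∘ₗ Q - P ∘ₗ Bd) ∘ₗ (Q ∘ₗ B - B ∘ₗ P) =
      (Bd ∘ₗ (Q ∘ₗ (Q ∘ₗ B))) - (Bd ∘ₗ (Q ∘ₗ (B ∘ₗ P))) - (P ∘ₗ (Bd ∘ₗ (Q ∘ₗ B)))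
        + (P ∘ₗ (Bd ∘ₗ (B ∘ₗ P))) := by
    simp only [LinearMap.sub_comp, LinearMap.comp_sub, LinearMap.comp_assoc]
    abel
  rw [expand]
  have tPBB : LinearMap.trace ℂ F ((B ∘ₗ P) ∘ₗ Bd) = LinearMap.trace ℂ E (P ∘ₗ Bd ∘ₗ B) := by
    rw [LinearMap.trace_comp_comm' Bd (B ∘ₗ P),
      show Bd ∘ₗ B ∘ₗ P = (Bd ∘ₗ B) ∘ₗ P by simp [LinearMap.comp_assoc],
      LinearMap.trace_comp_comm' P (Bd ∘ₗ B)]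
  have t1 : LinearMap.trace ℂ E (Bd ∘ₗ (Q ∘ₗ (Q ∘ₗ B))) =
      LinearMap.trace ℂ F (Q ∘ₗ B ∘ₗ Bd) := by
    rw [show Q ∘ₗ (Q ∘ₗ B) = (Q ∘ₗ Q) ∘ₗ B by simp [LinearMap.comp_assoc], hQidem,
      LinearMap.trace_comp_comm' (Q ∘ₗ B) Bd, LinearMap.comp_assoc]
  have t2 : LinearMap.trace ℂ E (Bd ∘ₗ (Q ∘ₗ (B ∘ₗ P))) =
      LinearMap.trace ℂ E (P ∘ₗ Bd ∘ₗ B) := by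
    rw [hQBP, LinearMap.trace_comp_comm' (B ∘ₗ P) Bd]
    exact tPBB
  have t3 : LinearMap.trace ℂ E (P ∘ₗ (Bd ∘ₗ (Q ∘ₗ B))) =
      LinearMap.trace ℂ E (P ∘ₗ Bd ∘ₗ B) := by
    rw [show P ∘ₗ Bd ∘ₗ Q ∘ₗ B = (P ∘ₗ Bd) ∘ₗ Q ∘ₗ B by simp [LinearMap.comp_assoc],
      LinearMap.trace_comp_comm' (Q ∘ₗ B) (P ∘ₗ Bd),
      show (Q ∘ₗ B) ∘ₗ P ∘ₗ Bd = (Q ∘ₗ B ∘ₗ P) ∘ₗ Bd by simp [LinearMap.comp_assoc],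
      hQBP]
    exact tPBB
  have t4 : LinearMap.trace ℂ E (P ∘ₗ (Bd ∘ₗ (B ∘ₗ P))) =
      LinearMap.trace ℂ E (P ∘ₗ Bd ∘ₗ B) := by
    rw [show P ∘ₗ Bd ∘ₗ B ∘ₗ P = (P ∘ₗ Bd ∘ₗ B) ∘ₗ P by simp [LinearMap.comp_assoc],
      LinearMap.trace_comp_comm' P (P ∘ₗ Bd ∘ₗ B),
      show P ∘ₗ P ∘ₗ Bd ∘ₗ B = (P ∘ₗ P) ∘ₗ Bd ∘ₗ B by simp [LinearMap.comp_assoc],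
      hPidem]
  rw [map_add, map_sub, map_sub, t1, t2, t3, t4]
  ring

lemma arrow_key (B : E →ₗ[ℂ] F) (U : Submodule ℂ E) (U' : Submodule ℂ F)
    (hB : ∀ x ∈ U, B x ∈ U') :
    ∃ r : ℝ, 0 ≤ r ∧
      LinearMap.trace ℂ F (projL U' ∘ₗ B ∘ₗ LinearMap.adjoint B) -
        LinearMap.trace ℂ E (projL U ∘ₗ LinearMap.adjoint B ∘ₗ B) = (r : ℂ) ∧
      (r = 0 ↔ ∀ x ∈ Uᗮ, B x ∈ U'ᗮ) := by
  obtain ⟨r, hr0, hrt, hr⟩ := trace_adjoint_comp_self (projL U' ∘ₗ B - B ∘ₗ projL U)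
  refine ⟨r, hr0, by rw [key_trace_identity B U U' hB]; exact hrt, ?_⟩
  rw [hr]
  constructor
  · intro hX x hx
    have h0 : projL U' (B x) = 0 := by
      have h1 := LinearMap.ext_iff.1 hX x
      simpa [LinearMap.sub_apply, LinearMap.comp_apply, projL_eq_zero hx] using h1
    have h2 := sub_projL_mem_orthogonal U' (B x)
    rwa [h0, sub_zero] at h2
  · intro h
    ext x
    have hq : x - projL U x ∈ Uᗮ := sub_projL_mem_orthogonal U x
    have hBq : B (x - projL U x) ∈ U'ᗮ := h _ hq
    have hBp : B (projL U x) ∈ U' := hB _ (projL_mem U x)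
    have hdec : B x = B (projL U x) + B (x - projL U x) := by
      rw [← map_add]; congr 1; abel
    simp only [LinearMap.sub_apply, LinearMap.comp_apply, LinearMap.zero_apply]
    rw [hdec, map_add, projL_eq_self hBp, projL_eq_zero hBq, add_zero, sub_self]

end AuxInner

lemma sum_fiberwise' {ι κ M : Type*} [Fintype ι] [Fintype κ] [DecidableEq κ] [AddCommMonoid M]
    (f : ι → κ) (g : ι → M) :
    ∑ b : κ, ∑ a : {a // f a = b}, g a.1 = ∑ a : ι, g a := by
  have h1 : ∑ p : Σ b : κ, {a // f a = b}, g p.2.1 = ∑ b : κ, ∑ a : {a // f a = b}, g a.1 := by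
    rw [← Finset.univ_sigma_univ, Finset.sum_sigma]
  rw [← h1]
  exact Fintype.sum_equiv (Equiv.sigmaFiberEquiv f) _ _ (fun p => rfl)

section AuxQuiver

set_option linter.unusedSectionVars false

/-- `W` is invariant under the adjoints of the structure maps. -/
def StarInv (ρ : ∀ α, V (s α) →ₗ[ℂ] V (t α)) (W : ∀ a, Submodule ℂ (V a)) : Prop :=
  ∀ α, ∀ x ∈ W (t α), LinearMap.adjoint (ρ α) x ∈ W (s α)

lemma starInv_of_perp (ρ : ∀ α, V (s α) →ₗ[ℂ] V (t α)) (W : ∀ a, Submodule ℂ (V a))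
    (h : ∀ α, ∀ x ∈ (W (s α))ᗮ, ρ α x ∈ (W (t α))ᗮ) : StarInv s t V ρ W := by
  intro α x hx
  have hmem : LinearMap.adjoint (ρ α) x ∈ (W (s α))ᗮᗮ := by
    rw [Submodule.mem_orthogonal]
    intro y hy
    rw [LinearMap.adjoint_inner_right]
    exact (Submodule.mem_orthogonal' _ _).1 (h α y hy) x hx
  rwa [Submodule.orthogonal_orthogonal] at hmem

lemma perp_of_starInv (ρ : ∀ α, V (s α) →ₗ[ℂ] V (t α)) (W : ∀ a, Submodule ℂ (V a))
    (h : StarInv s t V ρ W) : ∀ α, ∀ x ∈ (W (s α))ᗮ, ρ α x ∈ (W (t α))ᗮ := by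
  intro α x hx
  rw [Submodule.mem_orthogonal']
  intro u hu
  rw [← LinearMap.adjoint_inner_right]
  exact (Submodule.mem_orthogonal' _ _).1 hx _ (h α u hu)

lemma trace_proj_tTerm (ρ : ∀ α, V (s α) →ₗ[ℂ] V (t α)) (U : ∀ a, Submodule ℂ (V a))
    (a : Q₀) (α : {α : Q₁ // t α = a}) :
    LinearMap.trace ℂ (V a) (projL (U a) ∘ₗ tTerm s t V ρ a α) =
      LinearMap.trace ℂ (V (t α.1))
        (projL (U (t α.1)) ∘ₗ (ρ α.1 ∘ₗ LinearMap.adjoint (ρ α.1))) := by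
  obtain ⟨α, h⟩ := α
  subst h
  rfl

lemma trace_proj_sTerm (ρ : ∀ α, V (s α) →ₗ[ℂ] V (t α)) (U : ∀ a, Submodule ℂ (V a))
    (a : Q₀) (α : {α : Q₁ // s α = a}) :
    LinearMap.trace ℂ (V a) (projL (U a) ∘ₗ sTerm s t V ρ a α) =
      LinearMap.trace ℂ (V (s α.1))
        (projL (U (s α.1)) ∘ₗ (LinearMap.adjoint (ρ α.1) ∘ₗ ρ α.1)) := by
  obtain ⟨α, h⟩ := α
  subst h
  rfl

lemma global_id (ρ : ∀ α, V (s α) →ₗ[ℂ] V (t α)) (θ : Q₀ → ℝ) (c : ℂ)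
    (hEH : ∀ a, Kop s t V ρ θ a = c • (LinearMap.id : V a →ₗ[ℂ] V a))
    (U : ∀ a, Submodule ℂ (V a)) (hU : IsSubrep s t V ρ U) :
    ∃ r : Q₁ → ℝ, (∀ α, 0 ≤ r α) ∧
      c * (∑ a, (Module.finrank ℂ (U a) : ℂ)) =
        (∑ a, (θ a : ℂ) * (Module.finrank ℂ (U a) : ℂ)) + ∑ α, (r α : ℂ) ∧
      ((∀ α, r α = 0) ↔ ∀ α, ∀ x ∈ (U (s α))ᗮ, ρ α x ∈ (U (t α))ᗮ) := by
  choose r hr0 hrt hre using fun α : Q₁ => arrow_key (ρ α) (U (s α)) (U (t α)) (hU α)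
  refine ⟨r, hr0, ?_, ?_⟩
  · have key1 : ∀ a, LinearMap.trace ℂ (V a) (projL (U a) ∘ₗ Kop s t V ρ θ a) =
        c * (Module.finrank ℂ (U a) : ℂ) := by
      intro a
      rw [hEH a]
      have h1 : projL (U a) ∘ₗ (c • (LinearMap.id : V a →ₗ[ℂ] V a)) = c • projL (U a) := by
        ext x; simp
      rw [h1, map_smul, projL_trace, smul_eq_mul]
    have key2 : ∀ a, LinearMap.trace ℂ (V a) (projL (U a) ∘ₗ Kop s t V ρ θ a) =
        (θ a : ℂ) * (Module.finrank ℂ (U a) : ℂ) +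
          (∑ α : {α : Q₁ // t α = a},
            LinearMap.trace ℂ (V a) (projL (U a) ∘ₗ tTerm s t V ρ a α)) -
          (∑ α : {α : Q₁ // s α = a},
            LinearMap.trace ℂ (V a) (projL (U a) ∘ₗ sTerm s t V ρ a α)) := by
      intro a
      have h1 : projL (U a) ∘ₗ Kop s t V ρ θ a =
          (θ a : ℂ) • projL (U a) +
            (∑ α : {α : Q₁ // t α = a}, projL (U a) ∘ₗ tTerm s t V ρ a α) -
            (∑ α : {α : Q₁ // s α = a}, projL (U a) ∘ₗ sTerm s t V ρ a α) := by
        ext x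
        simp [Kop, LinearMap.sum_apply, map_sum, LinearMap.comp_apply, LinearMap.add_apply,
          LinearMap.sub_apply, LinearMap.smul_apply]
      rw [h1, map_sub, map_add, map_smul, map_sum, map_sum, projL_trace, smul_eq_mul]
    have ht : ∑ a, ∑ α : {α : Q₁ // t α = a},
          LinearMap.trace ℂ (V a) (projL (U a) ∘ₗ tTerm s t V ρ a α) =
        ∑ α : Q₁, LinearMap.trace ℂ (V (t α))
          (projL (U (t α)) ∘ₗ (ρ α ∘ₗ LinearMap.adjoint (ρ α))) := by
      rw [← sum_fiberwise' t (fun α => LinearMap.trace ℂ (V (t α))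
        (projL (U (t α)) ∘ₗ (ρ α ∘ₗ LinearMap.adjoint (ρ α))))]
      exact Finset.sum_congr rfl fun a _ => Finset.sum_congr rfl fun α _ =>
        trace_proj_tTerm s t V ρ U a α
    have hs : ∑ a, ∑ α : {α : Q₁ // s α = a},
          LinearMap.trace ℂ (V a) (projL (U a) ∘ₗ sTerm s t V ρ a α) =
        ∑ α : Q₁, LinearMap.trace ℂ (V (s α))
          (projL (U (s α)) ∘ₗ (LinearMap.adjoint (ρ α) ∘ₗ ρ α)) := by
      rw [← sum_fiberwise' s (fun α => LinearMap.trace ℂ (V (s α))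
        (projL (U (s α)) ∘ₗ (LinearMap.adjoint (ρ α) ∘ₗ ρ α)))]
      exact Finset.sum_congr rfl fun a _ => Finset.sum_congr rfl fun α _ =>
        trace_proj_sTerm s t V ρ U a α
    calc c * (∑ a, (Module.finrank ℂ (U a) : ℂ))
        = ∑ a, LinearMap.trace ℂ (V a) (projL (U a) ∘ₗ Kop s t V ρ θ a) := by
          rw [Finset.mul_sum]
          exact Finset.sum_congr rfl fun a _ => (key1 a).symm
      _ = (∑ a, (θ a : ℂ) * (Module.finrank ℂ (U a) : ℂ)) +
            (∑ a, ∑ α : {α : Q₁ // t α = a},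
              LinearMap.trace ℂ (V a) (projL (U a) ∘ₗ tTerm s t V ρ a α)) -
            (∑ a, ∑ α : {α : Q₁ // s α = a},
              LinearMap.trace ℂ (V a) (projL (U a) ∘ₗ sTerm s t V ρ a α)) := by
          rw [← Finset.sum_add_distrib, ← Finset.sum_sub_distrib]
          exact Finset.sum_congr rfl fun a _ => key2 a
      _ = (∑ a, (θ a : ℂ) * (Module.finrank ℂ (U a) : ℂ)) + ∑ α, ((r α : ℝ) : ℂ) := by
          rw [ht, hs, add_sub_assoc, ← Finset.sum_sub_distrib]
          congr 1
          exact Finset.sum_congr rfl fun α _ => hrt α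
  · constructor
    · intro h α
      exact (hre α).1 (h α)
    · intro h α
      exact (hre α).2 (h α)


lemma rank_pos_of_ne_bot (W : ∀ a, Submodule ℂ (V a)) (h : ∃ a, W a ≠ ⊥) :
    0 < ∑ a, Module.finrank ℂ (W a) := by
  obtain ⟨a, ha⟩ := h
  have hpos : 0 < Module.finrank ℂ (W a) := by
    haveI : Nontrivial (W a) := Submodule.nontrivial_iff_ne_bot.2 ha
    exact Module.finrank_pos
  exact Finset.sum_pos' (fun _ _ => Nat.zero_le _) ⟨a, Finset.mem_univ a, hpos⟩

lemma slope_key (ρ : ∀ α, V (s α) →ₗ[ℂ] V (t α)) (θ : Q₀ → ℝ) (cr : ℝ)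
    (hEH : ∀ a, Kop s t V ρ θ a = ((cr : ℂ)) • (LinearMap.id : V a →ₗ[ℂ] V a))
    (U : ∀ a, Submodule ℂ (V a)) (hU : IsSubrep s t V ρ U) (hUnz : ∃ a, U a ≠ ⊥) :
    subSlope V θ U ≤ cr ∧ (subSlope V θ U = cr ↔ StarInv s t V ρ U) := by
  obtain ⟨r, hr0, hid, hre⟩ := global_id s t V ρ θ ((cr : ℂ)) hEH U hU
  set R := ∑ α, r α with hR
  have hR0 : 0 ≤ R := Finset.sum_nonneg fun α _ => hr0 α
  have hreal : cr * (∑ a, (Module.finrank ℂ (U a) : ℝ)) =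
      (∑ a, θ a * (Module.finrank ℂ (U a) : ℝ)) + R := by
    have h2 : ((cr * (∑ a, (Module.finrank ℂ (U a) : ℝ)) : ℝ) : ℂ) =
        (((∑ a, θ a * (Module.finrank ℂ (U a) : ℝ)) + R : ℝ) : ℂ) := by
      rw [hR]
      push_cast
      exact hid
    exact_mod_cast h2
  have hrk : 0 < ∑ a, (Module.finrank ℂ (U a) : ℝ) := by
    exact_mod_cast rank_pos_of_ne_bot V U hUnz
  constructor
  · show (∑ a, θ a * (Module.finrank ℂ (U a) : ℝ)) / (∑ a, (Module.finrank ℂ (U a) : ℝ)) ≤ cr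
    rw [div_le_iff₀ hrk]
    linarith
  · constructor
    · intro heq
      apply starInv_of_perp
      apply hre.1
      have heq' : (∑ a, θ a * (Module.finrank ℂ (U a) : ℝ)) /
          (∑ a, (Module.finrank ℂ (U a) : ℝ)) = cr := heq
      rw [div_eq_iff hrk.ne'] at heq'
      have hRz : R = 0 := by linarith
      intro α
      exact (Finset.sum_eq_zero_iff_of_nonneg (fun α _ => hr0 α)).1 hRz α (Finset.mem_univ α)
    · intro hstar
      have hr00 : ∀ α, r α = 0 := hre.2 (perp_of_starInv s t V ρ U hstar)
      have hRz : R = 0 := Finset.sum_eq_zero fun α _ => hr00 α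
      show (∑ a, θ a * (Module.finrank ℂ (U a) : ℝ)) /
          (∑ a, (Module.finrank ℂ (U a) : ℝ)) = cr
      rw [div_eq_iff hrk.ne']
      linarith

lemma compl_lemma (ρ : ∀ α, V (s α) →ₗ[ℂ] V (t α)) {W U : ∀ a, Submodule ℂ (V a)}
    (hW : IsSubrep s t V ρ W) (hWs : StarInv s t V ρ W)
    (hU : IsSubrep s t V ρ U) (hUs : StarInv s t V ρ U) :
    IsSubrep s t V ρ (fun a => W a ⊓ (U a)ᗮ) ∧ StarInv s t V ρ (fun a => W a ⊓ (U a)ᗮ) := by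
  constructor
  · intro α x hx
    obtain ⟨hx1, hx2⟩ := Submodule.mem_inf.1 hx
    exact Submodule.mem_inf.2 ⟨hW α x hx1, perp_of_starInv s t V ρ U hUs α x hx2⟩
  · intro α x hx
    obtain ⟨hx1, hx2⟩ := Submodule.mem_inf.1 hx
    refine Submodule.mem_inf.2 ⟨hWs α x hx1, ?_⟩
    rw [Submodule.mem_orthogonal']
    intro u hu
    rw [LinearMap.adjoint_inner_left]
    exact (Submodule.mem_orthogonal' _ _).1 hx2 _ (hU α u hu)

lemma decomp_aux (ρ : ∀ α, V (s α) →ₗ[ℂ] V (t α)) (θ : Q₀ → ℝ) (cr : ℝ)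
    (hEH : ∀ a, Kop s t V ρ θ a = ((cr : ℂ)) • (LinearMap.id : V a →ₗ[ℂ] V a)) :
    ∀ N : ℕ, ∀ W : ∀ a, Submodule ℂ (V a), (∑ a, Module.finrank ℂ (W a)) ≤ N →
    IsSubrep s t V ρ W → StarInv s t V ρ W → (∃ a, W a ≠ ⊥) →
    ∃ (n : ℕ) (U : Fin n → ∀ a, Submodule ℂ (V a)),
      (∀ i, IsSubrep s t V ρ (U i)) ∧
      (∀ i, IsStableSubrep s t V ρ θ (U i)) ∧
      (∀ i a, U i a ≤ W a) ∧
      (∀ a, (⨆ i, U i a) = W a) ∧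
      (∀ i j, i ≠ j → OrthSubreps V (U i) (U j)) := by
  intro N
  induction N with
  | zero =>
    intro W hN _ _ hWnz
    exact absurd hN (by simpa using (rank_pos_of_ne_bot V W hWnz).ne')
  | succ N ih =>
    intro W hN hWsub hWstar hWnz
    by_cases hstab : IsStableSubrep s t V ρ θ W
    · refine ⟨1, fun _ => W, fun _ => hWsub, fun _ => hstab, fun _ a => le_rfl,
        fun a => by simp, fun i j hij => absurd (Subsingleton.elim i j) hij⟩
    · have hstab' : ¬((∃ a, W a ≠ ⊥) ∧
          ∀ W' : ∀ a, Submodule ℂ (V a), IsSubrep s t V ρ W' → (∀ a, W' a ≤ W a) →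
            (∃ a, W' a ≠ ⊥) → W' ≠ W → subSlope V θ W' < subSlope V θ W) := hstab
      push_neg at hstab'
      obtain ⟨U', hU'sub, hU'le, hU'nz, hU'ne, hU'slope⟩ := hstab' hWnz
      have hWkey := slope_key s t V ρ θ cr hEH W hWsub hWnz
      have hU'key := slope_key s t V ρ θ cr hEH U' hU'sub hU'nz
      have hWslope : subSlope V θ W = cr := hWkey.2.2 hWstar
      have hU'eq : subSlope V θ U' = cr :=
        le_antisymm hU'key.1 (by rw [← hWslope]; exact hU'slope)
      have hU'star : StarInv s t V ρ U' := hU'key.2.1 hU'eq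
      set W'' := fun a => W a ⊓ (U' a)ᗮ with hW''
      obtain ⟨hW''sub, hW''star⟩ := compl_lemma s t V ρ hWsub hWstar hU'sub hU'star
      have hsup : ∀ a, U' a ⊔ W'' a = W a := by
        intro a
        have h1 := Submodule.sup_orthogonal_inf_of_hasOrthogonalProjection (hU'le a)
        show U' a ⊔ (W a ⊓ (U' a)ᗮ) = W a
        rw [inf_comm]
        exact h1
      have hW''le : ∀ a, W'' a ≤ W a := fun a => inf_le_left
      have hW''nz : ∃ a, W'' a ≠ ⊥ := by
        by_contra h
        push_neg at h
        apply hU'ne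
        funext a
        have := hsup a
        rw [h a, sup_bot_eq] at this
        exact this
      have hrank : ∀ a, Module.finrank ℂ (U' a) + Module.finrank ℂ (W'' a) =
          Module.finrank ℂ (W a) := by
        intro a
        have hdisj : U' a ⊓ W'' a = ⊥ := by
          rw [eq_bot_iff]
          intro x hx
          obtain ⟨hx1, hx2⟩ := Submodule.mem_inf.1 hx
          obtain ⟨hx21, hx22⟩ := Submodule.mem_inf.1 (show x ∈ W a ⊓ (U' a)ᗮ from hx2)
          exact (Submodule.orthogonal_disjoint (U' a)).le_bot
            (Submodule.mem_inf.2 ⟨hx1, hx22⟩)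
        have h2 := Submodule.finrank_sup_add_finrank_inf_eq (U' a) (W'' a)
        rw [hsup a, hdisj, finrank_bot, add_zero] at h2
        exact h2.symm
      have hsum : (∑ a, Module.finrank ℂ (U' a)) + (∑ a, Module.finrank ℂ (W'' a)) =
          ∑ a, Module.finrank ℂ (W a) := by
        rw [← Finset.sum_add_distrib]
        exact Finset.sum_congr rfl fun a _ => hrank a
      have posU' := rank_pos_of_ne_bot V U' hU'nz
      have posW'' := rank_pos_of_ne_bot V W'' hW''nz
      obtain ⟨n1, U1, h1sub, h1st, h1le, h1sup, h1orth⟩ :=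
        ih U' (by omega) hU'sub hU'star hU'nz
      obtain ⟨n2, U2, h2sub, h2st, h2le, h2sup, h2orth⟩ :=
        ih W'' (by omega) hW''sub hW''star hW''nz
      have hWW' : ∀ a, ∀ v ∈ U' a, ∀ w ∈ W'' a, inner (𝕜 := ℂ) v w = (0 : ℂ) := by
        intro a v hv w hw
        obtain ⟨hw1, hw2⟩ := Submodule.mem_inf.1 (show w ∈ W a ⊓ (U' a)ᗮ from hw)
        exact (Submodule.mem_orthogonal (U' a) w).1 hw2 v hv
      have hW'W : ∀ a, ∀ w ∈ W'' a, ∀ v ∈ U' a, inner (𝕜 := ℂ) w v = (0 : ℂ) := by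
        intro a w hw v hv
        obtain ⟨hw1, hw2⟩ := Submodule.mem_inf.1 (show w ∈ W a ⊓ (U' a)ᗮ from hw)
        exact (Submodule.mem_orthogonal' (U' a) w).1 hw2 v hv
      refine ⟨n1 + n2, Fin.append U1 U2, ?_, ?_, ?_, ?_, ?_⟩
      · intro i
        induction i using Fin.addCases with
        | left i1 => simpa [Fin.append_left] using h1sub i1
        | right i1 => simpa [Fin.append_right] using h2sub i1
      · intro i
        induction i using Fin.addCases with
        | left i1 => simpa [Fin.append_left] using h1st i1
        | right i1 => simpa [Fin.append_right] using h2st i1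
      · intro i a
        induction i using Fin.addCases with
        | left i1 =>
          rw [Fin.append_left]
          exact (h1le i1 a).trans (hU'le a)
        | right i1 =>
          rw [Fin.append_right]
          exact (h2le i1 a).trans (hW''le a)
      · intro a
        apply le_antisymm
        · apply iSup_le
          intro i
          induction i using Fin.addCases with
          | left i1 =>
            rw [Fin.append_left]
            exact (h1le i1 a).trans (hU'le a)
          | right i1 =>
            rw [Fin.append_right]
            exact (h2le i1 a).trans (hW''le a)
        · rw [← hsup a]
          apply sup_le
          · rw [← h1sup a]
            apply iSup_le
            intro i
            refine le_iSup_of_le (Fin.castAdd n2 i) ?_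
            rw [Fin.append_left]
          · rw [← h2sup a]
            apply iSup_le
            intro i
            refine le_iSup_of_le (Fin.natAdd n1 i) ?_
            rw [Fin.append_right]
      · intro i j
        induction i using Fin.addCases with
        | left i1 =>
          induction j using Fin.addCases with
          | left j1 =>
            intro hne a v hv w hw
            rw [Fin.append_left] at hv hw
            exact h1orth i1 j1 (fun h => hne (by rw [h])) a v hv w hw
          | right j1 =>
            intro _ a v hv w hw
            rw [Fin.append_left] at hv
            rw [Fin.append_right] at hw
            exact hWW' a v (h1le i1 a hv) w (h2le j1 a hw)
        | right i1 =>
          induction j using Fin.addCases with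
          | left j1 =>
            intro _ a v hv w hw
            rw [Fin.append_right] at hv
            rw [Fin.append_left] at hw
            exact hW'W a v (h2le i1 a hv) w (h1le j1 a hw)
          | right j1 =>
            intro hne a v hv w hw
            rw [Fin.append_right] at hv hw
            exact h2orth i1 j1 (fun h => hne (by rw [h])) a v hv w hw

end AuxQuiver


/-- for a rational weight `θ`, a nonzero representation `(V, ρ)` and an
Einstein–Hermitian metric on it with respect to `θ` (the metric being given by the inner
products on the `V a`), there is a finite family of `θ`-stable subrepresentations which
decompose `(V, ρ)` as a pairwise orthogonal direct sum. -/
theorem einsteinHermitian_orthogonal_decomposition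
    {Q₀ Q₁ : Type*} [Fintype Q₀] [Fintype Q₁] [Nonempty Q₀] [DecidableEq Q₀]
    (s t : Q₁ → Q₀)
    (V : Q₀ → Type*) [∀ a, NormedAddCommGroup (V a)] [∀ a, InnerProductSpace ℂ (V a)]
    [∀ a, FiniteDimensional ℂ (V a)]
    (ρ : ∀ α, V (s α) →ₗ[ℂ] V (t α))
    (θ : Q₀ → ℚ)
    (hnz : 0 < ∑ a, Module.finrank ℂ (V a))
    (hEH : IsEinsteinHermitian s t V ρ (fun a => (θ a : ℝ))) :
    ∃ (n : ℕ) (W : Fin n → ∀ a, Submodule ℂ (V a)),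
      (∀ i, IsSubrep s t V ρ (W i)) ∧
      (∀ i, IsStableSubrep s t V ρ (fun a => (θ a : ℝ)) (W i)) ∧
      (∀ a, (⨆ i, W i a) = ⊤) ∧
      (∀ i j, i ≠ j → OrthSubreps V (W i) (W j)) := by
  have hEH' : ∃ c : ℂ, ∀ a, Kop s t V ρ (fun a => (θ a : ℝ)) a =
      c • (LinearMap.id : V a →ₗ[ℂ] V a) := hEH
  obtain ⟨c, hc⟩ := hEH'
  have htop_sub : IsSubrep s t V ρ (fun _ => ⊤) := fun α x _ => Submodule.mem_top
  have htop_star : StarInv s t V ρ (fun _ => ⊤) := fun α x _ => Submodule.mem_top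
  obtain ⟨r, hr0, hid, hre⟩ := global_id s t V ρ (fun a => (θ a : ℝ)) c hc (fun _ => ⊤) htop_sub
  have hperp : ∀ α, ∀ x ∈ ((⊤ : Submodule ℂ (V (s α)))ᗮ),
      ρ α x ∈ ((⊤ : Submodule ℂ (V (t α)))ᗮ) := by
    intro α x hx
    have hx0 : x = 0 := by simpa [Submodule.top_orthogonal_eq_bot] using hx
    simp [hx0]
  have hr00 : ∀ α, r α = 0 := hre.2 hperp
  have hid' : c * (∑ a, (Module.finrank ℂ (V a) : ℂ)) =
      ∑ a, ((θ a : ℝ) : ℂ) * (Module.finrank ℂ (V a) : ℂ) := by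
    simpa [finrank_top, hr00] using hid
  have hne : (∑ a, (Module.finrank ℂ (V a) : ℂ)) ≠ 0 := by
    have h1 : ((∑ a, Module.finrank ℂ (V a) : ℕ) : ℂ) ≠ 0 := Nat.cast_ne_zero.2 hnz.ne'
    simpa using h1
  set cr : ℝ := (∑ a, (θ a : ℝ) * (Module.finrank ℂ (V a) : ℝ)) /
    (∑ a, (Module.finrank ℂ (V a) : ℝ)) with hcr
  have hceq : c = ((cr : ℝ) : ℂ) := by
    rw [hcr]
    push_cast
    rw [eq_div_iff hne]
    exact hid'
  have hc' : ∀ a, Kop s t V ρ (fun a => (θ a : ℝ)) a =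
      ((cr : ℂ)) • (LinearMap.id : V a →ₗ[ℂ] V a) := fun a => by rw [hc a, hceq]
  have htopnz : ∃ a, (⊤ : Submodule ℂ (V a)) ≠ ⊥ := by
    by_contra h
    push_neg at h
    have hz : ∀ a, Module.finrank ℂ (V a) = 0 := by
      intro a
      rw [← finrank_top ℂ (V a), h a, finrank_bot]
    rw [Finset.sum_eq_zero (fun a _ => hz a)] at hnz
    exact lt_irrefl 0 hnz
  obtain ⟨n, U, hsub, hst, hle, hsup, horth⟩ := decomp_aux s t V ρ (fun a => (θ a : ℝ)) cr hc'
    (∑ a, Module.finrank ℂ (V a)) (fun _ => ⊤)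
    (le_of_eq (Finset.sum_congr rfl fun a _ => by rw [finrank_top])) htop_sub htop_star htopnz
  exact ⟨n, U, hsub, hst, hsup, horth⟩
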